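/- arXiv:1606.03806 — 4 statements merged into one kernel-verified Lean document; each statement's English description precedes it below -/
import Mathlib

section
/- Let (s₁^{(m)}, s₂^{(m)}) be a sequence of complex pairs with ζ₂(s₁^{(m)}, s₂^{(m)}) = 0 for all m, such that Re(s₁^{(m)}) → +∞ and the s₂^{(m)} stay in a compact set K contained in the half-plane Re(s₂) > 1. Then every limit point ρ of the sequence (s₂^{(m)}) satisfies ζ(ρ) = 1. -/
noncomputable def zeta2term (s₁ s₂ : ℂ) (n : ℕ × ℕ) : ℂ :=
  ((n.1 : ℂ) + 1) ^ (-s₁) * ((n.1 : ℂ) + (n.2 : ℂ) + 2) ^ (-s₂)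

noncomputable def zeta2 (s₁ s₂ : ℂ) : ℂ := ∑' n : ℕ × ℕ, zeta2term s₁ s₂ n

open Filter Complex

namespace Z2Aux

lemma norm_cpow_nat (k : ℕ) (hk : 0 < k) (s : ℂ) :
    ‖((k : ℂ)) ^ (-s)‖ = ((k : ℝ)) ^ (-s.re) := by
  rw [Complex.norm_natCast_cpow_of_pos hk, Complex.neg_re]

lemma summable_shift (a : ℝ) (ha : 1 < a) (k : ℕ) :
    Summable (fun n : ℕ => ((n + k : ℕ) : ℝ) ^ (-a)) := by
  have h : Summable (fun n : ℕ => (n : ℝ) ^ (-a)) :=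
    Real.summable_nat_rpow.mpr (by linarith)
  exact_mod_cast (summable_nat_add_iff k).mpr h

lemma norm_term (s₁ s₂ : ℂ) (n : ℕ × ℕ) :
    ‖zeta2term s₁ s₂ n‖ =
      ((n.1 + 1 : ℕ) : ℝ) ^ (-s₁.re) * ((n.1 + n.2 + 2 : ℕ) : ℝ) ^ (-s₂.re) := by
  have e1 : ((n.1 : ℂ) + 1) = ((n.1 + 1 : ℕ) : ℂ) := by push_cast; ring
  have e2 : ((n.1 : ℂ) + (n.2 : ℂ) + 2) = ((n.1 + n.2 + 2 : ℕ) : ℂ) := by push_cast; ring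
  rw [zeta2term, e1, e2, norm_mul, norm_cpow_nat _ (Nat.succ_pos _),
    norm_cpow_nat _ (by omega)]

lemma summable_norm_term (s₁ s₂ : ℂ) (h₁ : 1 < s₁.re) (h₂ : 1 < s₂.re) :
    Summable (fun n : ℕ × ℕ => ‖zeta2term s₁ s₂ n‖) := by
  have hg : Summable (fun n : ℕ × ℕ =>
      ((n.1 + 1 : ℕ) : ℝ) ^ (-s₁.re) * ((n.2 + 1 : ℕ) : ℝ) ^ (-s₂.re)) :=
    Summable.mul_of_nonneg (f := fun k : ℕ => ((k + 1 : ℕ) : ℝ) ^ (-s₁.re))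
      (g := fun k : ℕ => ((k + 1 : ℕ) : ℝ) ^ (-s₂.re))
      (summable_shift _ h₁ 1) (summable_shift _ h₂ 1)
      (fun _ => Real.rpow_nonneg (by positivity) _)
      (fun _ => Real.rpow_nonneg (by positivity) _)
  refine Summable.of_nonneg_of_le (fun _ => norm_nonneg _) (fun n => ?_) hg
  rw [norm_term]
  refine mul_le_mul_of_nonneg_left ?_ (Real.rpow_nonneg (by positivity) _)
  refine Real.rpow_le_rpow_of_nonpos (by positivity) ?_ (by linarith)
  exact_mod_cast (by omega : n.2 + 1 ≤ n.1 + n.2 + 2)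

lemma summable_term (s₁ s₂ : ℂ) (h₁ : 1 < s₁.re) (h₂ : 1 < s₂.re) :
    Summable (zeta2term s₁ s₂) :=
  (summable_norm_term s₁ s₂ h₁ h₂).of_norm

/-- Inner sum. -/
noncomputable def A (s : ℂ) (k : ℕ) : ℂ := ∑' n : ℕ, ((k : ℂ) + (n : ℂ) + 2) ^ (-s)

/-- C a = ∑ (n+2)^(-a). -/
noncomputable def C (a : ℝ) : ℝ := ∑' n : ℕ, ((n + 2 : ℕ) : ℝ) ^ (-a)

lemma norm_A_le (s : ℂ) (a : ℝ) (ha : 1 < a) (has : a ≤ s.re) (k : ℕ) :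
    ‖A s k‖ ≤ C a := by
  refine tsum_of_norm_bounded (summable_shift a ha 2).hasSum (fun n => ?_)
  have e : ((k : ℂ) + (n : ℂ) + 2) = ((k + n + 2 : ℕ) : ℂ) := by push_cast; ring
  rw [e, norm_cpow_nat _ (by omega)]
  calc ((k + n + 2 : ℕ) : ℝ) ^ (-s.re)
      ≤ ((n + 2 : ℕ) : ℝ) ^ (-s.re) := by
        refine Real.rpow_le_rpow_of_nonpos (by positivity) ?_ (by linarith)
        exact_mod_cast (by omega : n + 2 ≤ k + n + 2)
    _ ≤ ((n + 2 : ℕ) : ℝ) ^ (-a) :=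
        Real.rpow_le_rpow_of_exponent_le (by exact_mod_cast Nat.le_add_left 1 (n + 1)) (by linarith)

lemma summable_inner (s : ℂ) (hs : 1 < s.re) (k : ℕ) :
    Summable (fun n : ℕ => ((k : ℂ) + (n : ℂ) + 2) ^ (-s)) := by
  refine Summable.of_norm ?_
  refine Summable.of_nonneg_of_le (fun _ => norm_nonneg _) (fun n => ?_) (summable_shift s.re hs 2)
  have e : ((k : ℂ) + (n : ℂ) + 2) = ((k + n + 2 : ℕ) : ℂ) := by push_cast; ring
  rw [e, norm_cpow_nat _ (by omega)]
  refine Real.rpow_le_rpow_of_nonpos (by positivity) ?_ (by linarith)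
  exact_mod_cast (by omega : n + 2 ≤ k + n + 2)

lemma A_zero (s : ℂ) (hs : 1 < s.re) : A s 0 = riemannZeta s - 1 := by
  have hζ := zeta_eq_tsum_one_div_nat_add_one_cpow hs
  have hterm : ∀ n : ℕ, (1 : ℂ) / ((n : ℂ) + 1) ^ s = ((n + 1 : ℕ) : ℂ) ^ (-s) := by
    intro n
    rw [Complex.cpow_neg, one_div]
    norm_num
  have hsum : Summable (fun n : ℕ => ((n + 1 : ℕ) : ℂ) ^ (-s)) := by
    refine Summable.of_norm ?_
    have := summable_shift s.re hs 1
    refine this.congr fun n => ?_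
    rw [norm_cpow_nat _ (by omega)]
  have h0 : ∑' n : ℕ, ((n + 1 : ℕ) : ℂ) ^ (-s)
      = ((0 + 1 : ℕ) : ℂ) ^ (-s) + ∑' n : ℕ, ((n + 1 + 1 : ℕ) : ℂ) ^ (-s) :=
    Summable.tsum_eq_zero_add hsum
  have h1 : (((0 + 1 : ℕ) : ℂ)) ^ (-s) = 1 := by norm_num
  have h2 : ∑' n : ℕ, ((n + 1 + 1 : ℕ) : ℂ) ^ (-s) = A s 0 := by
    unfold A
    refine tsum_congr fun n => ?_
    congr 1
    push_cast; ring
  rw [hζ]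
  simp_rw [hterm] at *
  rw [h0, h1, h2]
  ring

lemma summable_outer (s₁ s₂ : ℂ) (h₁ : 1 < s₁.re) (h₂ : 1 < s₂.re) :
    Summable (fun k : ℕ => ((k : ℂ) + 1) ^ (-s₁) * A s₂ k) := by
  refine Summable.of_norm ?_
  refine Summable.of_nonneg_of_le (fun _ => norm_nonneg _) (fun k => ?_)
    (((summable_shift s₁.re h₁ 1).mul_right (C s₂.re)))
  rw [norm_mul]
  have e : ((k : ℂ) + 1) = ((k + 1 : ℕ) : ℂ) := by push_cast; ring
  rw [e, norm_cpow_nat _ (Nat.succ_pos _)]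
  exact mul_le_mul_of_nonneg_left (norm_A_le s₂ s₂.re h₂ le_rfl k)
    (Real.rpow_nonneg (by positivity) _)

lemma zeta2_eq (s₁ s₂ : ℂ) (h₁ : 1 < s₁.re) (h₂ : 1 < s₂.re) :
    zeta2 s₁ s₂ = (riemannZeta s₂ - 1) +
      ∑' k : ℕ, (((k : ℂ) + 1) + 1) ^ (-s₁) * A s₂ (k + 1) := by
  have hsum := summable_term s₁ s₂ h₁ h₂
  have hfib : ∀ b : ℕ, Summable fun c : ℕ => zeta2term s₁ s₂ (b, c) := fun b => by
    simpa [zeta2term] using ((summable_inner s₂ h₂ b).mul_left (((b : ℂ) + 1) ^ (-s₁)))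
  have h1 : zeta2 s₁ s₂ = ∑' k : ℕ, ((k : ℂ) + 1) ^ (-s₁) * A s₂ k := by
    rw [zeta2, Summable.tsum_prod hsum]
    refine tsum_congr fun b => ?_
    rw [A, ← tsum_mul_left]
    rfl
  have h2 := Summable.tsum_eq_zero_add (summable_outer s₁ s₂ h₁ h₂)
  rw [h1, h2]
  congr 1
  · rw [show ((0 : ℕ) : ℂ) + 1 = 1 by norm_num, Complex.one_cpow, one_mul, A_zero s₂ h₂]
  · refine tsum_congr fun k => ?_
    congr 2
    push_cast
    ring

lemma C_nonneg (a : ℝ) : 0 ≤ C a :=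
  tsum_nonneg fun _ => Real.rpow_nonneg (by positivity) _

lemma tail_bound (s₁ s₂ : ℂ) (a : ℝ) (ha : 1 < a) (h2 : a ≤ s₂.re) (h1 : 2 ≤ s₁.re) :
    ‖zeta2 s₁ s₂ - (riemannZeta s₂ - 1)‖ ≤
      (2 : ℝ) ^ (2 - s₁.re) * (C 2 * C a) := by
  have h₁' : 1 < s₁.re := by linarith
  have h₂' : 1 < s₂.re := lt_of_lt_of_le ha h2
  rw [zeta2_eq s₁ s₂ h₁' h₂', add_sub_cancel_left]
  have hg : HasSum (fun k : ℕ => (2 : ℝ) ^ (2 - s₁.re) * (((k + 2 : ℕ) : ℝ) ^ (-(2 : ℝ)) * C a))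
      ((2 : ℝ) ^ (2 - s₁.re) * (C 2 * C a)) :=
    ((summable_shift 2 one_lt_two 2).hasSum.mul_right (C a)).mul_left _
  refine tsum_of_norm_bounded hg (fun k => ?_)
  have e : ((k : ℂ) + 1 + 1) = ((k + 2 : ℕ) : ℂ) := by push_cast; ring
  rw [norm_mul, e, norm_cpow_nat _ (by omega)]
  have hxpos : (0 : ℝ) < ((k + 2 : ℕ) : ℝ) := by positivity
  have hsplit : ((k + 2 : ℕ) : ℝ) ^ (-s₁.re)
      = ((k + 2 : ℕ) : ℝ) ^ (2 - s₁.re) * ((k + 2 : ℕ) : ℝ) ^ (-(2 : ℝ)) := by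
    rw [← Real.rpow_add hxpos]
    ring_nf
  have hb : ((k + 2 : ℕ) : ℝ) ^ (2 - s₁.re) ≤ (2 : ℝ) ^ (2 - s₁.re) := by
    refine Real.rpow_le_rpow_of_nonpos two_pos ?_ (by linarith)
    exact_mod_cast (by omega : 2 ≤ k + 2)
  calc ((k + 2 : ℕ) : ℝ) ^ (-s₁.re) * ‖A s₂ (k + 1)‖
      ≤ ((k + 2 : ℕ) : ℝ) ^ (-s₁.re) * C a :=
        mul_le_mul_of_nonneg_left (norm_A_le s₂ a ha h2 _) (Real.rpow_nonneg hxpos.le _)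
    _ = ((k + 2 : ℕ) : ℝ) ^ (2 - s₁.re) * (((k + 2 : ℕ) : ℝ) ^ (-(2 : ℝ)) * C a) := by
        rw [hsplit]; ring
    _ ≤ (2 : ℝ) ^ (2 - s₁.re) * (((k + 2 : ℕ) : ℝ) ^ (-(2 : ℝ)) * C a) := by
        refine mul_le_mul_of_nonneg_right hb ?_
        exact mul_nonneg (Real.rpow_nonneg hxpos.le _) (C_nonneg a)

end Z2Aux

/-- If `(s₁⁽ᵐ⁾, s₂⁽ᵐ⁾)` are zeros of `ζ₂` with `Re s₁⁽ᵐ⁾ → +∞` and the `s₂⁽ᵐ⁾` staying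
in a compact set `K ⊆ {Re > 1}`, then every limit point `ρ` of `(s₂⁽ᵐ⁾)` satisfies
`ζ(ρ) = 1`. -/
theorem limit_points_of_zero_sets (s₁ s₂ : ℕ → ℂ)
    (hzero : ∀ m, zeta2 (s₁ m) (s₂ m) = 0)
    (hre : Filter.Tendsto (fun m => (s₁ m).re) Filter.atTop Filter.atTop)
    (K : Set ℂ) (hK : IsCompact K) (hK1 : K ⊆ {s : ℂ | 1 < s.re})
    (hmem : ∀ m, s₂ m ∈ K) :
    ∀ ρ : ℂ, (∃ φ : ℕ → ℕ, StrictMono φ ∧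
        Filter.Tendsto (fun m => s₂ (φ m)) Filter.atTop (nhds ρ)) →
      riemannZeta ρ = 1 := by
  obtain ⟨z₀, hz₀K, hmin⟩ := hK.exists_isMinOn ⟨s₂ 0, hmem 0⟩ Complex.continuous_re.continuousOn
  set a := z₀.re with ha_def
  have ha : 1 < a := hK1 hz₀K
  have hale : ∀ m, a ≤ (s₂ m).re := fun m => hmin (hmem m)
  have hbd : ∀ᶠ m in Filter.atTop, ‖riemannZeta (s₂ m) - 1‖ ≤
      (2 : ℝ) ^ (2 - (s₁ m).re) * (Z2Aux.C 2 * Z2Aux.C a) := by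
    filter_upwards [hre.eventually_ge_atTop 2] with m hm
    have := Z2Aux.tail_bound (s₁ m) (s₂ m) a ha (hale m) hm
    rwa [hzero m, zero_sub, norm_neg] at this
  have h0 : Filter.Tendsto (fun m => (2 : ℝ) ^ (2 - (s₁ m).re) * (Z2Aux.C 2 * Z2Aux.C a))
      Filter.atTop (nhds 0) := by
    rw [show (0 : ℝ) = 0 * (Z2Aux.C 2 * Z2Aux.C a) by ring]
    refine Filter.Tendsto.mul_const _ ?_
    have hb : Filter.Tendsto (fun m => 2 - (s₁ m).re) Filter.atTop Filter.atBot := by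
      have := Filter.tendsto_atBot_add_const_left Filter.atTop 2
        (Filter.tendsto_neg_atBot_iff.mpr hre)
      simpa [sub_eq_add_neg] using this
    exact (tendsto_rpow_atBot_of_base_gt_one 2 one_lt_two).comp hb
  have hζ : Filter.Tendsto (fun m => riemannZeta (s₂ m)) Filter.atTop (nhds 1) := by
    have h := (squeeze_zero_norm' hbd h0).add_const 1
    simpa using h
  rintro ρ ⟨φ, hφ, hφt⟩
  have hρK : ρ ∈ K := hK.isClosed.mem_of_tendsto hφt (Filter.Eventually.of_forall fun m => hmem _)
  have hρre : 1 < ρ.re := hK1 hρK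
  have hρ1 : ρ ≠ 1 := by
    intro h; rw [h] at hρre; simp at hρre
  have t1 : Filter.Tendsto (fun m => riemannZeta (s₂ (φ m))) Filter.atTop (nhds 1) :=
    hζ.comp hφ.tendsto_atTop
  have t2 : Filter.Tendsto (fun m => riemannZeta (s₂ (φ m))) Filter.atTop
      (nhds (riemannZeta ρ)) :=
    ((differentiableAt_riemannZeta hρ1).continuousAt.tendsto).comp hφt
  exact tendsto_nhds_unique t2 t1
end

section
/- Let ρ₂ be a complex number with Re(ρ₂) > 1 and ζ(ρ₂) = 1, and suppose ρ₂ is an isolated zero of s ↦ ζ(s) − 1 (which holds automatically since ζ − 1 is a nonzero holomorphic function). Then for every ε > 0 there exists a pair (s₁, s₂) with ζ₂(s₁, s₂) = 0 and |s₂ − ρ₂| < ε. (One may take Re(s₁) arbitrarily large.) -/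
open Complex Set Metric Filter

lemma norm_zeta2term (s₁ s₂ : ℂ) (n : ℕ × ℕ) :
    ‖zeta2term s₁ s₂ n‖
      = ((n.1 : ℝ) + 1) ^ (-s₁.re) * ((n.1 : ℝ) + (n.2 : ℝ) + 2) ^ (-s₂.re) := by
  have h1 : ((n.1 : ℂ) + 1) = ((((n.1 : ℝ) + 1 : ℝ)) : ℂ) := by push_cast; ring
  have h2 : ((n.1 : ℂ) + (n.2 : ℂ) + 2) = ((((n.1 : ℝ) + (n.2 : ℝ) + 2 : ℝ)) : ℂ) := by
    push_cast; ring
  rw [zeta2term, norm_mul, h1, h2,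
    Complex.norm_cpow_eq_rpow_re_of_pos (by positivity),
    Complex.norm_cpow_eq_rpow_re_of_pos (by positivity), Complex.neg_re, Complex.neg_re]

lemma summable_shift {b : ℝ} (hb : 1 < b) :
    Summable (fun n : ℕ => ((n : ℝ) + 1) ^ (-b)) := by
  have h0 : Summable (fun n : ℕ => (n : ℝ) ^ (-b)) :=
    (Real.summable_nat_rpow (p := -b)).mpr (by linarith)
  have := (summable_nat_add_iff (f := fun n : ℕ => (n : ℝ) ^ (-b)) 1).mpr h0
  refine this.congr fun n => ?_
  push_cast
  ring_nf

lemma summable_shift2 : Summable (fun n : ℕ => ((n : ℝ) + 2) ^ (-(2:ℝ))) := by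
  have h0 : Summable (fun n : ℕ => (n : ℝ) ^ (-(2:ℝ))) :=
    (Real.summable_nat_rpow (p := -(2:ℝ))).mpr (by norm_num)
  have := (summable_nat_add_iff (f := fun n : ℕ => (n : ℝ) ^ (-(2:ℝ))) 2).mpr h0
  refine this.congr fun n => ?_
  push_cast
  ring_nf

lemma summable_aux {a σ : ℝ} (ha : 1 < a) (hσ : 1 < σ) :
    Summable (fun n : ℕ × ℕ => ((n.1 : ℝ) + 1) ^ (-a) * ((n.2 : ℝ) + 1) ^ (-σ)) :=
  (summable_shift ha).mul_of_nonneg (summable_shift hσ)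
    (fun n => by positivity) (fun n => by positivity)

lemma summable_auxB {σ : ℝ} (hσ : 1 < σ) :
    Summable (fun n : ℕ × ℕ => ((n.1 : ℝ) + 2) ^ (-(2:ℝ)) * ((n.2 : ℝ) + 1) ^ (-σ)) :=
  summable_shift2.mul_of_nonneg (summable_shift hσ)
    (fun n => by positivity) (fun n => by positivity)

lemma zeta2term_norm_le {s₁ s₂ : ℂ} {σ : ℝ} (hσ0 : 0 < σ) (hσ : σ ≤ s₂.re) (n : ℕ × ℕ) :
    ‖zeta2term s₁ s₂ n‖ ≤ ((n.1 : ℝ) + 1) ^ (-s₁.re) * ((n.2 : ℝ) + 1) ^ (-σ) := by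
  rw [norm_zeta2term]
  have hb1 : ((n.1 : ℝ) + (n.2 : ℝ) + 2) ^ (-s₂.re) ≤ ((n.1 : ℝ) + (n.2 : ℝ) + 2) ^ (-σ) :=
    Real.rpow_le_rpow_of_exponent_le
      (by linarith [Nat.cast_nonneg (α := ℝ) n.1, Nat.cast_nonneg (α := ℝ) n.2])
      (by linarith)
  have hb2 : ((n.1 : ℝ) + (n.2 : ℝ) + 2) ^ (-σ) ≤ ((n.2 : ℝ) + 1) ^ (-σ) :=
    Real.rpow_le_rpow_of_nonpos (by positivity)
      (by linarith [Nat.cast_nonneg (α := ℝ) n.1])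
      (by linarith)
  exact mul_le_mul_of_nonneg_left (hb1.trans hb2) (by positivity)

lemma summable_norm_zeta2term {s₁ s₂ : ℂ} (h₁ : 1 < s₁.re) (h₂ : 1 < s₂.re) :
    Summable (fun n : ℕ × ℕ => ‖zeta2term s₁ s₂ n‖) :=
  Summable.of_nonneg_of_le (fun n => norm_nonneg _)
    (fun n => zeta2term_norm_le (by linarith) (le_refl s₂.re) n) (summable_aux h₁ h₂)

lemma zeta_sub_one_eq {s : ℂ} (hs : 1 < s.re) :
    riemannZeta s - 1 = ∑' n : ℕ, ((n : ℂ) + 2) ^ (-s) := by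
  have hsum : Summable (fun n : ℕ => 1 / ((n : ℂ) + 1) ^ s) := by
    have h0 : Summable (fun n : ℕ => 1 / (n : ℂ) ^ s) :=
      (Complex.summable_one_div_nat_cpow (p := s)).mpr hs
    have := (summable_nat_add_iff (f := fun n : ℕ => 1 / (n : ℂ) ^ s) 1).mpr h0
    refine this.congr fun n => ?_
    push_cast
    ring_nf
  have h := zeta_eq_tsum_one_div_nat_add_one_cpow hs
  rw [Summable.tsum_eq_zero_add hsum] at h
  have h0 : (1 : ℂ) / ((0 : ℕ) + 1 : ℂ) ^ s = 1 := by norm_num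
  rw [h0] at h
  have h2 : riemannZeta s - 1 = ∑' n : ℕ, 1 / (((n : ℕ) + 1 : ℂ) + 1) ^ s := by
    rw [h]; push_cast; ring
  rw [h2]
  refine tsum_congr fun n => ?_
  rw [Complex.cpow_neg, one_div]
  norm_num
  ring_nf

lemma zeta2_eq {s₁ s₂ : ℂ} (h₁ : 1 < s₁.re) (h₂ : 1 < s₂.re) :
    zeta2 s₁ s₂ = (riemannZeta s₂ - 1) + ∑' n : ℕ × ℕ, zeta2term s₁ s₂ (n.1 + 1, n.2) := by
  have hs : Summable (zeta2term s₁ s₂) := (summable_norm_zeta2term h₁ h₂).of_norm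
  have hrow : ∀ a : ℕ, Summable fun b => zeta2term s₁ s₂ (a, b) := fun a => hs.prod_factor a
  have houter : Summable (fun a : ℕ => ∑' b, zeta2term s₁ s₂ (a, b)) :=
    ⟨_, hs.hasSum.prod_fiberwise (fun a => (hrow a).hasSum)⟩
  have hinj : Function.Injective (fun n : ℕ × ℕ => (n.1 + 1, n.2)) := by
    intro p q h
    simp only [Prod.mk.injEq] at h
    exact Prod.ext (by omega) h.2
  have hs' : Summable (fun n : ℕ × ℕ => zeta2term s₁ s₂ (n.1 + 1, n.2)) :=
    hs.comp_injective hinj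
  rw [zeta2, Summable.tsum_prod' hs hrow, Summable.tsum_eq_zero_add houter]
  congr 1
  · rw [zeta_sub_one_eq h₂]
    refine tsum_congr fun b => ?_
    rw [zeta2term]
    norm_num
  · exact (Summable.tsum_prod' hs' (fun a => hs'.prod_factor a)).symm

lemma tail_bound {x σ₀ : ℝ} (hx : 2 ≤ x) (hσ : 1 < σ₀) {s₂ : ℂ} (hs₂ : σ₀ ≤ s₂.re) :
    ‖∑' n : ℕ × ℕ, zeta2term (x : ℂ) s₂ (n.1 + 1, n.2)‖
      ≤ (2 : ℝ) ^ (-(x - 2)) * ∑' n : ℕ × ℕ, ((n.1 : ℝ) + 2) ^ (-(2:ℝ)) * ((n.2 : ℝ) + 1) ^ (-σ₀) := by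
  have hu : Summable (fun n : ℕ × ℕ => ((n.1 : ℝ) + 2) ^ (-(2:ℝ)) * ((n.2 : ℝ) + 1) ^ (-σ₀)) :=
    summable_auxB hσ
  have hptwise : ∀ n : ℕ × ℕ, ‖zeta2term (x : ℂ) s₂ (n.1 + 1, n.2)‖
      ≤ (2 : ℝ) ^ (-(x - 2)) * (((n.1 : ℝ) + 2) ^ (-(2:ℝ)) * ((n.2 : ℝ) + 1) ^ (-σ₀)) := by
    intro n
    have h1 : ‖zeta2term (x : ℂ) s₂ (n.1 + 1, n.2)‖
        ≤ (((n.1 + 1 : ℕ) : ℝ) + 1) ^ (-(x : ℂ).re) * (((n.2 : ℕ) : ℝ) + 1) ^ (-σ₀) :=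
      zeta2term_norm_le (by linarith) hs₂ (n.1 + 1, n.2)
    have h2 : (((n.1 + 1 : ℕ) : ℝ) + 1) = ((n.1 : ℝ) + 2) := by push_cast; ring
    rw [h2, Complex.ofReal_re] at h1
    refine h1.trans ?_
    have hA : (0:ℝ) < (n.1 : ℝ) + 2 := by positivity
    have hkey : ((n.1 : ℝ) + 2) ^ (-x)
        ≤ (2 : ℝ) ^ (-(x - 2)) * ((n.1 : ℝ) + 2) ^ (-(2:ℝ)) := by
      have hsplit : ((n.1 : ℝ) + 2) ^ (-x)
          = ((n.1 : ℝ) + 2) ^ (-(x - 2)) * ((n.1 : ℝ) + 2) ^ (-(2:ℝ)) := by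
        rw [← Real.rpow_add hA]; ring_nf
      rw [hsplit]
      refine mul_le_mul_of_nonneg_right ?_ (by positivity)
      exact Real.rpow_le_rpow_of_nonpos (by norm_num)
        (by linarith [Nat.cast_nonneg (α := ℝ) n.1]) (by linarith)
    calc ((n.1 : ℝ) + 2) ^ (-x) * ((n.2 : ℝ) + 1) ^ (-σ₀)
        ≤ ((2 : ℝ) ^ (-(x - 2)) * ((n.1 : ℝ) + 2) ^ (-(2:ℝ))) * ((n.2 : ℝ) + 1) ^ (-σ₀) :=
          mul_le_mul_of_nonneg_right hkey (by positivity)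
      _ = (2 : ℝ) ^ (-(x - 2)) * (((n.1 : ℝ) + 2) ^ (-(2:ℝ)) * ((n.2 : ℝ) + 1) ^ (-σ₀)) := by
          ring
  have hsumm : Summable (fun n : ℕ × ℕ => ‖zeta2term (x : ℂ) s₂ (n.1 + 1, n.2)‖) :=
    Summable.of_nonneg_of_le (fun n => norm_nonneg _) hptwise (hu.mul_left _)
  calc ‖∑' n : ℕ × ℕ, zeta2term (x : ℂ) s₂ (n.1 + 1, n.2)‖
      ≤ ∑' n : ℕ × ℕ, ‖zeta2term (x : ℂ) s₂ (n.1 + 1, n.2)‖ := norm_tsum_le_tsum_norm hsumm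
    _ ≤ ∑' n : ℕ × ℕ, (2 : ℝ) ^ (-(x - 2)) * (((n.1 : ℝ) + 2) ^ (-(2:ℝ)) * ((n.2 : ℝ) + 1) ^ (-σ₀)) :=
        Summable.tsum_le_tsum hptwise hsumm (hu.mul_left _)
    _ = (2 : ℝ) ^ (-(x - 2)) * ∑' n : ℕ × ℕ, ((n.1 : ℝ) + 2) ^ (-(2:ℝ)) * ((n.2 : ℝ) + 1) ^ (-σ₀) :=
        tsum_mul_left

lemma zeta2_differentiableOn {x σ₀ : ℝ} (hx : 1 < x) (hσ : 1 < σ₀) :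
    DifferentiableOn ℂ (zeta2 (x : ℂ)) {s : ℂ | σ₀ < s.re} := by
  have hopen : IsOpen {s : ℂ | σ₀ < s.re} := isOpen_lt continuous_const Complex.continuous_re
  have := differentiableOn_tsum_of_summable_norm (F := fun n (w : ℂ) => zeta2term (x : ℂ) w n)
    (summable_aux hx hσ)
    (fun n => ?_) hopen (fun n w hw => ?_)
  · exact this
  · have hb : ((n.1 : ℂ) + (n.2 : ℂ) + 2) ≠ 0 := by
      have h : ((n.1 + n.2 + 2 : ℕ) : ℂ) ≠ 0 := Nat.cast_ne_zero.mpr (by omega)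
      push_cast at h
      exact h
    have hd : Differentiable ℂ (fun w : ℂ => ((n.1 : ℂ) + 1) ^ (-(x:ℂ)) *
        ((n.1 : ℂ) + (n.2 : ℂ) + 2) ^ (-w)) :=
      ((differentiable_neg).const_cpow (Or.inl hb)).const_mul _
    exact hd.differentiableOn
  · have hw' : σ₀ ≤ w.re := le_of_lt hw
    have := zeta2term_norm_le (s₁ := (x : ℂ)) (by linarith) hw' n
    rwa [Complex.ofReal_re] at this

/-- Conversely: if `Re ρ₂ > 1` and `ζ(ρ₂) = 1`, then for every `ε > 0` there is a zero
`(s₁, s₂)` of `ζ₂` with `|s₂ − ρ₂| < ε`; moreover `Re s₁` may be taken arbitrarily large. -/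
theorem zeros_near_solutions (ρ₂ : ℂ) (hρ : 1 < ρ₂.re) (hζ : riemannZeta ρ₂ = 1) :
    ∀ ε > 0, ∀ M : ℝ, ∃ s₁ s₂ : ℂ, M < s₁.re ∧ 1 < s₂.re ∧
      zeta2 s₁ s₂ = 0 ∧ ‖s₂ - ρ₂‖ < ε := by
  intro ε hε M
  set g : ℂ → ℂ := fun s => riemannZeta s - 1 with hgdef
  have hUopen : IsOpen {s : ℂ | 1 < s.re} := isOpen_lt continuous_const Complex.continuous_re
  have hgdiff : DifferentiableOn ℂ g {s : ℂ | 1 < s.re} := by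
    intro s hs
    have hs1 : s ≠ 1 := by
      intro h
      rw [h] at hs
      simp only [mem_setOf_eq, Complex.one_re] at hs
      exact lt_irrefl 1 hs
    exact ((differentiableAt_riemannZeta hs1).sub_const 1).differentiableWithinAt
  have hgan : AnalyticOnNhd ℂ g {s : ℂ | 1 < s.re} := hgdiff.analyticOnNhd hUopen
  have hg0 : g ρ₂ = 0 := by simp [hgdef, hζ]
  -- ρ₂ is an isolated zero of g
  have hiso : ∀ᶠ z in nhdsWithin ρ₂ {ρ₂}ᶜ, g z ≠ 0 := by
    rcases (hgan ρ₂ hρ).eventually_eq_zero_or_eventually_ne_zero with h | h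
    · exfalso
      have hfreq : ∃ᶠ z in nhdsWithin ρ₂ {ρ₂}ᶜ, g z = 0 :=
        ((h.filter_mono nhdsWithin_le_nhds).frequently)
      have heq := hgan.eqOn_zero_of_preconnected_of_frequently_eq_zero
        ((convex_halfSpace_re_gt (1:ℝ)).isPreconnected) hρ hfreq
      have h2 : g 2 = 0 := heq (by norm_num [mem_setOf_eq])
      rw [hgdef] at h2
      simp only [riemannZeta_two, sub_eq_zero] at h2
      have h3 : ((Real.pi ^ 2 / 6 : ℝ) : ℂ) = ((1 : ℝ) : ℂ) := by push_cast; exact h2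
      have h4 : Real.pi ^ 2 / 6 = 1 := Complex.ofReal_inj.mp h3
      nlinarith [Real.pi_gt_three]
    · exact h
  rw [eventually_nhdsWithin_iff, Metric.eventually_nhds_iff] at hiso
  obtain ⟨r₀, hr₀, hiso'⟩ := hiso
  set σ₀ : ℝ := (ρ₂.re + 1) / 2 with hσ₀def
  have hσ₀ : 1 < σ₀ := by rw [hσ₀def]; linarith
  have hσρ : σ₀ < ρ₂.re := by rw [hσ₀def]; linarith
  set r : ℝ := min (min (r₀ / 2) (ε / 2)) ((ρ₂.re - 1) / 4) with hrdef
  have hr : 0 < r := by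
    apply lt_min (lt_min (by linarith) (by linarith)) (by linarith)
  have hrr₀ : r < r₀ := lt_of_le_of_lt ((min_le_left _ _).trans (min_le_left _ _)) (by linarith)
  have hrε : r < ε := lt_of_le_of_lt ((min_le_left _ _).trans (min_le_right _ _)) (by linarith)
  have hr4 : r ≤ (ρ₂.re - 1) / 4 := min_le_right _ _
  have hball : closedBall ρ₂ r ⊆ {s : ℂ | σ₀ < s.re} := by
    intro z hz
    have h2 : ‖z - ρ₂‖ ≤ r := by rwa [mem_closedBall, dist_eq_norm] at hz
    have h1 : |z.re - ρ₂.re| ≤ ‖z - ρ₂‖ := by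
      simpa [Complex.sub_re] using Complex.abs_re_le_norm (z - ρ₂)
    have := abs_le.mp (h1.trans h2)
    simp only [mem_setOf_eq, hσ₀def]
    linarith [this.1]
  -- min of ‖g‖ on the sphere
  have hsub1 : Metric.sphere ρ₂ r ⊆ {s : ℂ | 1 < s.re} := fun z hz => by
    have := hball (sphere_subset_closedBall hz)
    simp only [mem_setOf_eq] at this ⊢
    linarith
  obtain ⟨z₀, hz₀s, hz₀min⟩ := (isCompact_sphere ρ₂ r).exists_isMinOn
    (NormedSpace.sphere_nonempty.mpr hr.le) ((hgdiff.continuousOn.mono hsub1).norm)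
  set c : ℝ := ‖g z₀‖ with hcdef
  have hc : 0 < c := by
    rw [hcdef, norm_pos_iff]
    apply hiso'
    · rw [mem_sphere] at hz₀s; rw [hz₀s]; exact hrr₀
    · intro h
      rw [mem_sphere, h, dist_self] at hz₀s
      exact hr.ne hz₀s
  -- bound constant B
  set B : ℝ := ∑' n : ℕ × ℕ, ((n.1 : ℝ) + 2) ^ (-(2:ℝ)) * ((n.2 : ℝ) + 1) ^ (-σ₀) with hBdef
  have hB0 : 0 ≤ B := tsum_nonneg fun n => by positivity
  obtain ⟨k, hk⟩ := exists_pow_lt_of_lt_one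
    (show (0:ℝ) < c / (2 * (B + 1)) by positivity) (by norm_num : (1/2 : ℝ) < 1)
  set x : ℝ := max M 0 + k + 2 with hxdef
  have hxM : M < x := by
    have := le_max_left M 0
    have := le_max_right M 0
    have : (0:ℝ) ≤ (k:ℝ) := Nat.cast_nonneg k
    rw [hxdef]
    have h1 : M ≤ max M 0 := le_max_left M 0
    linarith [Nat.cast_nonneg (α := ℝ) k]
  have hx2 : 2 ≤ x := by
    rw [hxdef]
    have := le_max_right M 0
    linarith [Nat.cast_nonneg (α := ℝ) k]
  have hx1 : 1 < x := by linarith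
  have hδ : (2 : ℝ) ^ (-(x - 2)) * B < c / 2 := by
    have hq1 : (2 : ℝ) ^ (-(x - 2)) ≤ (2 : ℝ) ^ (-(k : ℝ)) := by
      apply Real.rpow_le_rpow_of_exponent_le (by norm_num)
      have : (k : ℝ) ≤ x - 2 := by
        rw [hxdef]
        have := le_max_right M 0
        linarith
      linarith
    have hq2 : (2 : ℝ) ^ (-(k : ℝ)) = (1/2 : ℝ) ^ k := by
      rw [Real.rpow_neg (by norm_num), Real.rpow_natCast]
      rw [one_div, inv_pow]
    have hq3 : (2 : ℝ) ^ (-(x - 2)) < c / (2 * (B + 1)) := by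
      calc (2 : ℝ) ^ (-(x - 2)) ≤ (1/2 : ℝ) ^ k := by rw [← hq2]; exact hq1
        _ < c / (2 * (B + 1)) := hk
    calc (2 : ℝ) ^ (-(x - 2)) * B ≤ c / (2 * (B + 1)) * B := by
          apply mul_le_mul_of_nonneg_right hq3.le hB0
      _ < c / (2 * (B + 1)) * (B + 1) := by
          apply mul_lt_mul_of_pos_left (by linarith) (by positivity)
      _ = c / 2 := by field_simp
  have hxre : ((x : ℂ)).re = x := Complex.ofReal_re x
  -- uniform approximation on the closed ball
  have happrox : ∀ w ∈ closedBall ρ₂ r, ‖zeta2 (x : ℂ) w - g w‖ < c / 2 := by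
    intro w hw
    have hwσ : σ₀ < w.re := hball hw
    have hw1 : 1 < w.re := by linarith
    have hdecomp := zeta2_eq (s₁ := (x : ℂ)) (s₂ := w) (by rw [hxre]; linarith) hw1
    have heq : zeta2 (x : ℂ) w - g w = ∑' n : ℕ × ℕ, zeta2term (x : ℂ) w (n.1 + 1, n.2) := by
      rw [hdecomp, hgdef]
      ring
    rw [heq]
    calc ‖∑' n : ℕ × ℕ, zeta2term (x : ℂ) w (n.1 + 1, n.2)‖
        ≤ (2 : ℝ) ^ (-(x - 2)) * B := tail_bound hx2 hσ₀ hwσ.le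
      _ < c / 2 := hδ
  by_cases hzero : ∃ w ∈ closedBall ρ₂ r, zeta2 (x : ℂ) w = 0
  · obtain ⟨w, hw, hw0⟩ := hzero
    refine ⟨(x : ℂ), w, by rwa [hxre], ?_, hw0, ?_⟩
    · have := hball hw; simp only [mem_setOf_eq] at this; linarith
    · rw [mem_closedBall, dist_eq_norm] at hw
      linarith
  · exfalso
    push_neg at hzero
    have hVopen : IsOpen {s : ℂ | σ₀ < s.re} := isOpen_lt continuous_const Complex.continuous_re
    have hfd : DifferentiableOn ℂ (zeta2 (x : ℂ)) {s : ℂ | σ₀ < s.re} :=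
      zeta2_differentiableOn hx1 hσ₀
    set W : Set ℂ := {s : ℂ | σ₀ < s.re} ∩ (zeta2 (x : ℂ)) ⁻¹' ({0}ᶜ) with hWdef
    have hWopen : IsOpen W :=
      hfd.continuousOn.isOpen_inter_preimage hVopen isOpen_compl_singleton
    have hcbW : closedBall ρ₂ r ⊆ W := fun z hz => ⟨hball hz, hzero z hz⟩
    have hinv : DifferentiableOn ℂ (fun w => (zeta2 (x : ℂ) w)⁻¹) W :=
      (hfd.mono inter_subset_left).inv fun z hz => hz.2
    have hdc : DiffContOnCl ℂ (fun w => (zeta2 (x : ℂ) w)⁻¹) (ball ρ₂ r) := by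
      apply DifferentiableOn.diffContOnCl
      rw [closure_ball ρ₂ hr.ne']
      exact hinv.mono hcbW
    have hbd : ∀ z ∈ frontier (ball ρ₂ r), ‖(zeta2 (x : ℂ) z)⁻¹‖ ≤ (c / 2)⁻¹ := by
      intro z hz
      rw [frontier_ball ρ₂ hr.ne'] at hz
      have hz' : z ∈ closedBall ρ₂ r := sphere_subset_closedBall hz
      have h1 : c ≤ ‖g z‖ := hz₀min hz
      have h2 : ‖zeta2 (x : ℂ) z - g z‖ < c / 2 := happrox z hz'
      have h3 : c / 2 < ‖zeta2 (x : ℂ) z‖ := by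
        have h4 : ‖g z‖ - ‖zeta2 (x : ℂ) z‖ ≤ ‖zeta2 (x : ℂ) z - g z‖ :=
          (norm_sub_norm_le _ _).trans (norm_sub_rev (g z) _).le
        linarith
      rw [norm_inv]
      apply inv_anti₀ (by positivity) h3.le
    have hval := Complex.norm_le_of_forall_mem_frontier_norm_le isBounded_ball hdc hbd
      (z := ρ₂) (by rw [closure_ball ρ₂ hr.ne']; exact mem_closedBall_self hr.le)
    have hfρ : zeta2 (x : ℂ) ρ₂ ≠ 0 := hzero ρ₂ (mem_closedBall_self hr.le)
    rw [norm_inv] at hval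
    have hpos : 0 < ‖zeta2 (x : ℂ) ρ₂‖ := norm_pos_iff.mpr hfρ
    have h5 : c / 2 ≤ ‖zeta2 (x : ℂ) ρ₂‖ := by
      have hc2 : (0:ℝ) < c / 2 := by positivity
      by_contra hcon
      push_neg at hcon
      have : (c / 2)⁻¹ < ‖zeta2 (x : ℂ) ρ₂‖⁻¹ := by
        apply inv_strictAnti₀ hpos hcon
      linarith
    have h6 : ‖zeta2 (x : ℂ) ρ₂‖ < c / 2 := by
      have := happrox ρ₂ (mem_closedBall_self hr.le)
      rwa [hg0, sub_zero] at this
    linarith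
end

section
/- For every r ≥ 2 and complex numbers s₁,…,s_r each with real part > 1, the harmonic product decomposition holds: ζ(s₁)·ζ_{r−1}(s₂,…,s_r) = ζ_r(s₁,s₂,…,s_r) + ζ_{r−1}(s₁+s₂,s₃,…,s_r) + ζ_r(s₂,s₁,s₃,…,s_r) + ζ_{r−1}(s₂,s₁+s₃,s₄,…,s_r) + … + ζ_r(s₂,…,s_{r−1},s₁,s_r) + ζ_{r−1}(s₂,…,s_{r−1},s₁+s_r) + ζ_r(s₂,…,s_{r−1},s_r,s₁), obtained by classifying the position of n₁ relative to the increasing tuple n₂ < ⋯ < n_r. -/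
open Finset Complex


/-- The Euler–Zagier `r`-fold zeta-function
`ζ_r(s₁,…,s_r) = Σ_{1 ≤ m₁ < ⋯ < m_r} m₁^{-s₁} ⋯ m_r^{-s_r}`, indexed over gaps
`n : Fin r → ℕ` via `m_k = (Σ_{i ≤ k} n_i) + k + 1`. -/
noncomputable def ez (r : ℕ) (s : Fin r → ℂ) : ℂ :=
  ∑' n : Fin r → ℕ, ∏ k : Fin r,
    ((∑ i ∈ Finset.Iic k, (n i : ℂ)) + (k : ℕ) + 1) ^ (-(s k))

namespace HProd

/-- positions from gaps -/
def pos {r : ℕ} (g : Fin r → ℕ) (k : Fin r) : ℕ := (∑ i ∈ Finset.Iic k, g i) + k + 1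

lemma pos_zero {r : ℕ} (g : Fin (r+1) → ℕ) : pos g 0 = g 0 + 1 := by
  have h : Finset.Iic (0 : Fin (r+1)) = {0} := by
    ext j; simp [Fin.le_zero_iff]
  simp [pos, h]

lemma Iic_succ {r : ℕ} (i : Fin r) :
    Finset.Iic (i.succ) = insert i.succ (Finset.Iic i.castSucc) := by
  ext j
  simp only [Finset.mem_Iic, Finset.mem_insert, Fin.le_def, Fin.ext_iff, Fin.val_succ,
    Fin.coe_castSucc]
  omega

lemma pos_succ {r : ℕ} (g : Fin (r+1) → ℕ) (i : Fin r) :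
    pos g i.succ = pos g i.castSucc + g i.succ + 1 := by
  have hnot : i.succ ∉ Finset.Iic i.castSucc := by
    simp [Fin.le_def]
  rw [pos, pos, Iic_succ, Finset.sum_insert hnot]
  have h1 : ((i.succ : Fin (r+1)) : ℕ) = ((i.castSucc : Fin (r+1)) : ℕ) + 1 := by simp
  omega

lemma strictMono_pos {r : ℕ} (g : Fin (r+1) → ℕ) : StrictMono (pos g) := by
  rw [Fin.strictMono_iff_lt_succ]
  intro i
  rw [pos_succ]
  omega

lemma pos_pos {r : ℕ} (g : Fin r → ℕ) (k : Fin r) : 0 < pos g k := by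
  simp [pos]

/-- strictly increasing positive tuples of length `r+1` -/
def T (r : ℕ) := {m : Fin (r+1) → ℕ // StrictMono m ∧ 0 < m 0}

lemma T.pos {r : ℕ} (m : T r) (k : Fin (r+1)) : 0 < m.1 k :=
  lt_of_lt_of_le m.2.2 (m.2.1.monotone (Fin.zero_le k))

/-- the equivalence between gap coordinates and increasing tuples -/
noncomputable def gapEquiv (r : ℕ) : (Fin (r+1) → ℕ) ≃ T r := by
  apply Equiv.ofBijective (fun g => (⟨pos g, strictMono_pos g, pos_pos g 0⟩ : T r))
  constructor
  · intro g g' h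
    have h' : ∀ k, pos g k = pos g' k := fun k => congrFun (congrArg Subtype.val h) k
    funext k
    induction k using Fin.cases with
    | zero =>
      have := h' 0
      rw [pos_zero, pos_zero] at this
      omega
    | succ i =>
      have h1 := h' i.succ
      have h2 := h' i.castSucc
      rw [pos_succ, pos_succ] at h1
      omega
  · rintro ⟨m, hmono, hpos⟩
    refine ⟨Fin.cases (m 0 - 1) (fun i => m i.succ - m i.castSucc - 1), ?_⟩
    apply Subtype.ext
    funext k
    show pos _ k = m k
    induction k using Fin.induction with
    | zero =>
      rw [pos_zero]
      simp only [Fin.cases_zero]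
      omega
    | succ i ih =>
      rw [pos_succ, ih]
      simp only [Fin.cases_succ]
      have := hmono (Fin.castSucc_lt_succ (i := i))
      omega

noncomputable def fc {r : ℕ} (s : Fin r → ℂ) (m : Fin r → ℕ) : ℂ :=
  ∏ k : Fin r, (m k : ℂ) ^ (-(s k))



lemma lt_iff_lt_card {N : ℕ} {m : Fin N → ℕ} (hm : StrictMono m) (v : ℕ) (j : Fin N) :
    m j < v ↔ (j : ℕ) < (Finset.univ.filter (fun k => m k < v)).card := by
  constructor
  · intro h
    have hsub : Finset.Iic j ⊆ Finset.univ.filter (fun k => m k < v) := by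
      intro k hk
      simp only [Finset.mem_Iic] at hk
      simp only [Finset.mem_filter, Finset.mem_univ, true_and]
      exact lt_of_le_of_lt (hm.monotone hk) h
    have := Finset.card_le_card hsub
    rw [Fin.card_Iic] at this
    omega
  · intro h
    by_contra hmj
    have hsub : Finset.univ.filter (fun k => m k < v) ⊆ Finset.Iio j := by
      intro k hk
      simp only [Finset.mem_filter, Finset.mem_univ, true_and] at hk
      simp only [Finset.mem_Iio]
      by_contra hk2
      exact hmj (lt_of_le_of_lt (hm.monotone (not_lt.1 hk2)) hk)
    have := Finset.card_le_card hsub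
    rw [Fin.card_Iio] at this
    omega

lemma strictMono_insertNth {N : ℕ} {p : Fin (N+1)} {x : ℕ} {m : Fin N → ℕ} (hm : StrictMono m)
    (h1 : ∀ j : Fin N, j.castSucc < p → m j < x) (h2 : ∀ j : Fin N, p ≤ j.castSucc → x < m j) :
    StrictMono (p.insertNth x m) := by
  intro k l hkl
  rcases eq_or_ne k p with rfl | hk
  · obtain ⟨j, rfl⟩ := Fin.exists_succAbove_eq (Fin.ne_of_gt hkl)
    rw [Fin.insertNth_apply_same, Fin.insertNth_apply_succAbove]
    exact h2 j ((Fin.lt_succAbove_iff_le_castSucc k j).1 hkl)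
  · obtain ⟨j, rfl⟩ := Fin.exists_succAbove_eq hk
    rcases eq_or_ne l p with rfl | hl
    · rw [Fin.insertNth_apply_same, Fin.insertNth_apply_succAbove]
      exact h1 j ((Fin.succAbove_lt_iff_castSucc_lt l j).1 hkl)
    · obtain ⟨j', rfl⟩ := Fin.exists_succAbove_eq hl
      rw [Fin.insertNth_apply_succAbove, Fin.insertNth_apply_succAbove]
      exact hm (Fin.succAbove_lt_succAbove_iff.1 hkl)

lemma eq_of_castSucc_lt_iff {N : ℕ} {p p' : Fin (N+1)}
    (h : ∀ j : Fin N, j.castSucc < p ↔ j.castSucc < p') : p = p' := by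
  rcases lt_trichotomy p p' with hlt | he | hlt
  · exfalso
    have hp : (p : ℕ) < N := by
      have := Fin.lt_def.1 hlt
      have := p'.isLt
      omega
    have h2 := (h ⟨(p : ℕ), hp⟩).2
      (by rw [Fin.lt_def, Fin.coe_castSucc]; exact Fin.lt_def.1 hlt)
    rw [Fin.lt_def, Fin.coe_castSucc] at h2
    exact lt_irrefl _ h2
  · exact he
  · exfalso
    have hp : (p' : ℕ) < N := by
      have := Fin.lt_def.1 hlt
      have := p.isLt
      omega
    have h2 := (h ⟨(p' : ℕ), hp⟩).1
      (by rw [Fin.lt_def, Fin.coe_castSucc]; exact Fin.lt_def.1 hlt)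
    rw [Fin.lt_def, Fin.coe_castSucc] at h2
    exact lt_irrefl _ h2

section Phi
variable {n : ℕ}

def removeElt (p : Fin (n+2)) (M : T (n+1)) : T n :=
  ⟨fun j => M.1 (p.succAbove j),
   fun a b h => M.2.1 (Fin.succAbove_lt_succAbove_iff.2 h),
   M.pos _⟩

def Φ : (Σ j : Fin (n+2) ⊕ Fin (n+1),
    Sum.elim (fun _ : Fin (n+2) => T (n+1)) (fun _ : Fin (n+1) => T n) j) → ℕ × T n
  | ⟨.inl p, M⟩ => (M.1 p - 1, removeElt p M)
  | ⟨.inr i, m⟩ => (m.1 i - 1, m)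

lemma phi_inl (p : Fin (n+2)) (M : T (n+1)) :
    Φ ⟨Sum.inl p, M⟩ = (M.1 p - 1, removeElt p M) := rfl

lemma phi_inr (i : Fin (n+1)) (m : T n) :
    Φ ⟨Sum.inr i, m⟩ = (m.1 i - 1, m) := rfl

lemma phi_bijective : Function.Bijective (Φ (n := n)) := by
  constructor
  · rintro ⟨p | i, M⟩ ⟨p' | i', M'⟩ h
    · simp only [Φ, Prod.mk.injEq] at h
      obtain ⟨h1, h2⟩ := h
      have hv : M.1 p = M'.1 p' := by
        have := M.pos p
        have := M'.pos p'
        omega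
      have hm : ∀ j, M.1 (p.succAbove j) = M'.1 (p'.succAbove j) :=
        fun j => congrFun (congrArg Subtype.val h2) j
      have hpp : p = p' := by
        apply eq_of_castSucc_lt_iff
        intro j
        rw [← Fin.succAbove_lt_iff_castSucc_lt p j, ← Fin.succAbove_lt_iff_castSucc_lt p' j,
          ← M.2.1.lt_iff_lt, ← M'.2.1.lt_iff_lt, hm j, hv]
      subst hpp
      have hMM : M.1 = M'.1 := by
        have e1 := Fin.insertNth_self_removeNth p M.1
        have e2 := Fin.insertNth_self_removeNth p M'.1
        have hrm : p.removeNth M.1 = p.removeNth M'.1 := funext hm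
        rw [← e1, ← e2, hv, hrm]
      have hMM' : M = M' := Subtype.ext hMM
      rw [hMM']
    · exfalso
      replace h := (phi_inl p M).symm.trans (h.trans (phi_inr i' M')); replace h := Prod.mk.inj h
      obtain ⟨h1, h2⟩ := h
      have hv : M.1 p = M'.1 i' := by
        have := M.pos p
        have := M'.pos i'
        omega
      have h2' : removeElt p M = M' := h2
      have : M.1 (p.succAbove i') = M'.1 i' := congrFun (congrArg Subtype.val h2') i'
      rw [← hv] at this
      exact Fin.succAbove_ne p i' (M.2.1.injective this)
    · exfalso
      replace h := (phi_inr i M).symm.trans (h.trans (phi_inl p' M')); replace h := Prod.mk.inj h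
      obtain ⟨h1, h2⟩ := h
      have hv : M'.1 p' = M.1 i := by
        have := M'.pos p'
        have := M.pos i
        omega
      have : M'.1 (p'.succAbove i) = M.1 i := congrFun (congrArg Subtype.val h2.symm) i
      rw [← hv] at this
      exact Fin.succAbove_ne p' i (M'.2.1.injective this)
    · replace h := (phi_inr i M).symm.trans (h.trans (phi_inr i' M')); replace h := Prod.mk.inj h
      obtain ⟨h1, h2⟩ := h
      have hmm : M = M' := h2
      subst hmm
      have hv : M.1 i = M.1 i' := by
        have := M.pos i
        have := M.pos i'
        omega
      have hii : i = i' := M.2.1.injective hv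
      rw [hii]
  · rintro ⟨a, m⟩
    by_cases h : ∃ i, m.1 i = a + 1
    · obtain ⟨i, hi⟩ := h
      refine ⟨⟨Sum.inr i, m⟩, ?_⟩
      rw [phi_inr, hi]
      simp
    · let c := (Finset.univ.filter (fun k => m.1 k < a + 1)).card
      have hc : c ≤ n + 1 := by
        have := Finset.card_filter_le Finset.univ (fun k : Fin (n+1) => m.1 k < a + 1)
        exact le_trans this (by simp)
      set p : Fin (n+2) := ⟨c, by omega⟩ with hp
      have h1 : ∀ j : Fin (n+1), j.castSucc < p → m.1 j < a + 1 := by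
        intro j hj
        rw [Fin.lt_def] at hj
        exact (lt_iff_lt_card m.2.1 (a+1) j).2 hj
      have h2 : ∀ j : Fin (n+1), p ≤ j.castSucc → a + 1 < m.1 j := by
        intro j hj
        rw [Fin.le_def] at hj
        have hnlt : ¬ m.1 j < a + 1 := by
          intro hcon
          have := (lt_iff_lt_card m.2.1 (a+1) j).1 hcon
          simp only [Fin.coe_castSucc, hp, Fin.val_mk, c] at hj
          omega
        have hne : m.1 j ≠ a + 1 := fun hcon => h ⟨j, hcon⟩
        omega
      have hmono := strictMono_insertNth m.2.1 h1 h2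
      have hpos0 : 0 < Fin.insertNth (α := fun _ => ℕ) p (a+1) m.1 0 := by
        rcases eq_or_ne (0 : Fin (n+2)) p with h0 | h0
        · rw [← h0] at hmono ⊢
          rw [show (Fin.insertNth (α := fun _ => ℕ) (0:Fin (n+2)) (a+1) m.1 0) = a + 1 from
            Fin.insertNth_apply_same (α := fun _ => ℕ) 0 (a+1) m.1]
          omega
        · obtain ⟨j, hj⟩ := Fin.exists_succAbove_eq h0
          rw [← hj, Fin.insertNth_apply_succAbove]
          exact m.pos j
      refine ⟨⟨Sum.inl p, ⟨Fin.insertNth (α := fun _ => ℕ) p (a+1) m.1, hmono, hpos0⟩⟩, ?_⟩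
      simp only [Φ, Prod.mk.injEq]
      constructor
      · show Fin.insertNth (α := fun _ => ℕ) p (a+1) m.1 p - 1 = a
        rw [Fin.insertNth_apply_same (α := fun _ => ℕ) p (a+1) m.1]
        omega
      · apply Subtype.ext
        funext j
        show Fin.insertNth (α := fun _ => ℕ) p (a+1) m.1 (p.succAbove j) = m.1 j
        exact Fin.insertNth_apply_succAbove (α := fun _ => ℕ) p (a+1) m.1 j

end Phi


lemma summable_base {σ : ℝ} (hσ : 1 < σ) : Summable (fun a : ℕ => ((a : ℝ) + 1) ^ (-σ)) := by
  have h := Real.summable_nat_rpow.2 (by linarith : -σ < -1)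
  have h2 := (summable_nat_add_iff 1).2 h
  apply h2.congr
  intro a
  push_cast
  rfl

lemma summable_pi : ∀ (r : ℕ) (σ : Fin (r+1) → ℝ), (∀ k, 1 < σ k) →
    Summable (fun g : Fin (r+1) → ℕ => ∏ k, ((g k : ℝ) + 1) ^ (-(σ k))) := by
  intro r
  induction r with
  | zero =>
    intro σ hσ
    apply ((Equiv.funUnique (Fin 1) ℕ).symm.summable_iff).1
    apply (summable_base (hσ 0)).congr
    intro a
    simp [Fin.prod_univ_one]
  | succ r ih =>
    intro σ hσ
    apply ((Fin.consEquiv (fun _ : Fin (r+2) => ℕ)).summable_iff).1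
    have hbase := summable_base (hσ 0)
    have hrest := ih (fun i => σ i.succ) (fun i => hσ i.succ)
    apply (hbase.mul_of_nonneg hrest ?_ ?_).congr
    · rintro ⟨a, g⟩
      show ((a:ℝ)+1)^(-σ 0) * ∏ i, ((g i : ℝ)+1)^(-(σ i.succ))
        = ∏ k : Fin (r+2), (((Fin.cons a g : Fin (r+2) → ℕ) k : ℝ) + 1) ^ (-σ k)
      symm
      rw [Fin.prod_univ_succ]
      simp [Fin.cons_zero, Fin.cons_succ]
    · intro a
      positivity
    · intro g
      apply Finset.prod_nonneg
      intro k _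
      positivity

lemma pos_ge {r : ℕ} (g : Fin r → ℕ) (k : Fin r) : g k + 1 ≤ pos g k := by
  have h : g k ≤ ∑ i ∈ Finset.Iic k, g i :=
    Finset.single_le_sum (fun i _ => Nat.zero_le _) (Finset.mem_Iic.2 le_rfl)
  simp only [pos]
  omega


lemma summable_T (r : ℕ) (s : Fin (r+1) → ℂ) (hs : ∀ k, 1 < (s k).re) :
    Summable (fun m : T r => ‖fc s m.1‖) := by
  rw [← (gapEquiv r).summable_iff]
  apply Summable.of_nonneg_of_le (g := fun g => ‖fc s (pos g)‖)
    (fun g => norm_nonneg _) ?_ (summable_pi r (fun k => (s k).re) hs)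
  intro g
  show ‖fc s (pos g)‖ ≤ _
  unfold fc
  rw [norm_prod]
  apply Finset.prod_le_prod (fun k _ => norm_nonneg _)
  intro k _
  rw [Complex.norm_natCast_cpow_of_pos (pos_pos g k), Complex.neg_re]
  have h1 : ((g k : ℝ) + 1) ≤ (pos g k : ℝ) := by exact_mod_cast pos_ge g k
  exact Real.rpow_le_rpow_of_nonpos (by positivity) h1
    (neg_nonpos.2 (le_of_lt (lt_trans zero_lt_one (hs k))))

lemma ez_eq (r : ℕ) (s : Fin (r+1) → ℂ) : ez (r+1) s = ∑' m : T r, fc s m.1 := by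
  rw [← (gapEquiv r).tsum_eq (fun m : T r => fc s m.1)]
  apply tsum_congr
  intro g
  show ∏ k : Fin (r+1), ((∑ i ∈ Finset.Iic k, ((g i : ℕ) : ℂ)) + (k : ℕ) + 1) ^ (-(s k))
    = ∏ k : Fin (r+1), ((pos g k : ℕ) : ℂ) ^ (-(s k))
  apply Finset.prod_congr rfl
  intro k _
  congr 1
  rw [pos]
  push_cast
  ring

section Weights
variable {n : ℕ}

lemma weight_inl (s₁ : ℂ) (t : Fin (n+1) → ℂ) (p : Fin (n+2)) (M : T (n+1)) :
    (((M.1 p - 1 : ℕ) : ℂ) + 1) ^ (-s₁) * fc t (removeElt p M).1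
      = fc (p.insertNth s₁ t) M.1 := by
  have hc : ((M.1 p - 1 : ℕ) : ℂ) + 1 = ((M.1 p : ℕ) : ℂ) := by
    have := M.pos p
    exact_mod_cast congrArg (Nat.cast : ℕ → ℂ) (by omega : (M.1 p - 1) + 1 = M.1 p)
  rw [hc]
  unfold fc
  rw [Fin.prod_univ_succAbove
    (fun k => ((M.1 k : ℂ)) ^ (-((p.insertNth s₁ t : Fin (n+2) → ℂ) k))) p,
    Fin.insertNth_apply_same]
  congr 1
  apply Finset.prod_congr rfl
  intro j _
  rw [Fin.insertNth_apply_succAbove]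
  rfl

lemma weight_inr (s₁ : ℂ) (t : Fin (n+1) → ℂ) (i : Fin (n+1)) (m : T n) :
    (((m.1 i - 1 : ℕ) : ℂ) + 1) ^ (-s₁) * fc t m.1
      = fc (Function.update t i (s₁ + t i)) m.1 := by
  have hc : ((m.1 i - 1 : ℕ) : ℂ) + 1 = ((m.1 i : ℕ) : ℂ) := by
    have := m.pos i
    exact_mod_cast congrArg (Nat.cast : ℕ → ℂ) (by omega : (m.1 i - 1) + 1 = m.1 i)
  have hne : ((m.1 i : ℕ) : ℂ) ≠ 0 := Nat.cast_ne_zero.mpr (m.pos i).ne'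
  rw [hc]
  unfold fc
  rw [← Finset.mul_prod_erase Finset.univ (fun k => ((m.1 k : ℂ)) ^ (-(t k)))
    (Finset.mem_univ i)]
  rw [← Finset.mul_prod_erase Finset.univ
    (fun k => ((m.1 k : ℂ)) ^ (-(Function.update t i (s₁ + t i) k))) (Finset.mem_univ i)]
  have herase : ∏ k ∈ Finset.univ.erase i, ((m.1 k : ℂ)) ^ (-(Function.update t i (s₁ + t i) k))
      = ∏ k ∈ Finset.univ.erase i, ((m.1 k : ℂ)) ^ (-(t k)) := by
    apply Finset.prod_congr rfl
    intro k hk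
    rw [Function.update_of_ne (Finset.ne_of_mem_erase hk)]
  rw [herase, Function.update_self]
  rw [show -(s₁ + t i) = -s₁ + -(t i) by ring, Complex.cpow_add _ _ hne, ← mul_assoc]

end Weights

end HProd

open HProd


/-- Harmonic product decomposition (here `r = n + 2 ≥ 2`, and `t = (s₂,…,s_r)`):
`ζ(s₁) ζ_{r−1}(s₂,…,s_r)` equals the sum over all `r` ways to insert `s₁` into the
tuple `(s₂,…,s_r)` (giving `ζ_r` terms) plus the sum over the `r − 1` ways to merge
`s₁` with one entry `s_i` (giving `ζ_{r−1}` terms with `s_i` replaced by `s₁ + s_i`). -/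
theorem harmonic_product_r (n : ℕ) (s₁ : ℂ) (t : Fin (n + 1) → ℂ)
    (h₁ : 1 < s₁.re) (ht : ∀ i, 1 < (t i).re) :
    riemannZeta s₁ * ez (n + 1) t =
      (∑ p : Fin (n + 2), ez (n + 2) (p.insertNth s₁ t)) +
      ∑ i : Fin (n + 1), ez (n + 1) (Function.update t i (s₁ + t i)) := by
  classical
  have hsum1 : Summable (fun a : ℕ => ‖((a : ℂ) + 1) ^ (-s₁)‖) := by
    apply (summable_base h₁).congr
    intro a
    have hcast : ((a : ℂ) + 1) = (((a + 1 : ℕ)) : ℂ) := by push_cast; ring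
    rw [hcast, Complex.norm_natCast_cpow_of_pos (Nat.succ_pos a), Complex.neg_re]
    congr 1
    push_cast
    ring
  have hsum2 := summable_T n t ht
  have hζ : riemannZeta s₁ = ∑' a : ℕ, ((a : ℂ) + 1) ^ (-s₁) := by
    rw [zeta_eq_tsum_one_div_nat_add_one_cpow h₁]
    exact tsum_congr fun a => by rw [Complex.cpow_neg, one_div]
  rw [hζ, ez_eq n t, tsum_mul_tsum_of_summable_norm hsum1 hsum2]
  have hw : Summable (fun z : ℕ × T n => ((z.1 : ℂ) + 1) ^ (-s₁) * fc t z.2.1) := by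
    apply Summable.of_norm
    apply ((hsum1.mul_of_nonneg hsum2 (fun _ => norm_nonneg _) (fun _ => norm_nonneg _))).congr
    intro z
    exact (norm_mul _ _).symm
  let e := Equiv.ofBijective (Φ (n := n)) phi_bijective
  have key : ∑' (z : ℕ × T n), ((z.1 : ℂ) + 1) ^ (-s₁) * fc t z.2.1
      = ∑' σ : (Σ j : Fin (n+2) ⊕ Fin (n+1),
          Sum.elim (fun _ : Fin (n+2) => T (n+1)) (fun _ : Fin (n+1) => T n) j),
        (((Φ σ).1 : ℂ) + 1) ^ (-s₁) * fc t (Φ σ).2.1 :=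
    (Equiv.tsum_eq e (fun z : ℕ × T n => ((z.1 : ℂ) + 1) ^ (-s₁) * fc t z.2.1)).symm
  rw [key]
  have hS : Summable (fun σ : (Σ j : Fin (n+2) ⊕ Fin (n+1),
          Sum.elim (fun _ : Fin (n+2) => T (n+1)) (fun _ : Fin (n+1) => T n) j) =>
        (((Φ σ).1 : ℂ) + 1) ^ (-s₁) * fc t (Φ σ).2.1) :=
    (Equiv.summable_iff e
      (f := fun z : ℕ × T n => ((z.1 : ℂ) + 1) ^ (-s₁) * fc t z.2.1)).2 hw
  rw [hS.tsum_sigma, tsum_fintype, Fintype.sum_sum_type]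
  congr 1
  · apply Finset.sum_congr rfl
    intro p _
    rw [ez_eq (n+1)]
    show ∑' (M : T (n+1)), (((Φ ⟨Sum.inl p, M⟩).1 : ℂ) + 1) ^ (-s₁)
        * fc t (Φ ⟨Sum.inl p, M⟩).2.1 = _
    apply tsum_congr
    intro M
    exact weight_inl s₁ t p M
  · apply Finset.sum_congr rfl
    intro i _
    rw [ez_eq n]
    show ∑' (m : T n), (((Φ ⟨Sum.inr i, m⟩).1 : ℂ) + 1) ^ (-s₁)
        * fc t (Φ ⟨Sum.inr i, m⟩).2.1 = _
    apply tsum_congr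
    intro m
    exact weight_inr s₁ t i m
end

section
/- Define F_{r−1}(s₂,…,s_r) = Σ_{j=1}^{r−1} (−1)^{r−j+1} ζ_j(s_{r−j+1},…,s_r) − (−1)^r. Then for r ≥ 2 and complex ρ₂,…,ρ_r each of real part > 1, F_{r−1}(ρ₂,…,ρ_r) equals the absolutely convergent series Σ_{n₂≥1,…,n_r≥1} (1+n₂)^{-ρ₂} (1+n₂+n₃)^{-ρ₃} ⋯ (1+n₂+⋯+n_r)^{-ρ_r}. -/
/-- `F_{r−1}(s₂,…,s_r) = Σ_{j=1}^{r−1} (−1)^{r−j+1} ζ_j(s_{r−j+1},…,s_r) − (−1)^r`.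
Here `q = r − 1` and `t = (s₂,…,s_r)`; the `j`-th summand uses the last `j` entries
of `t`, with sign `(−1)^{r−j+1} = (−1)^{q−j+2}`, and `−(−1)^r = −(−1)^{q+1}`. -/
noncomputable def Fpoly (q : ℕ) (t : Fin q → ℂ) : ℂ :=
  (∑ j ∈ (Finset.Icc 1 q).attach,
      (-1 : ℂ) ^ (q - j.1 + 2) *
        ez j.1 (fun k => t ⟨q - j.1 + k.1, by
          have h1 := j.2
          have h2 := k.isLt
          simp only [Finset.mem_Icc] at h1
          omega⟩)) -
    (-1 : ℂ) ^ (q + 1)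


open Finset

/-- sum over Iic as an `if`-sum over univ -/
lemma sum_Iic_eq_ite {M : Type*} [AddCommMonoid M] {m : ℕ} (g : Fin m → M) (k : Fin m) :
    ∑ i ∈ Finset.Iic k, g i = ∑ i : Fin m, if i ≤ k then g i else 0 := by
  rw [← Finset.sum_filter]
  congr 1
  ext i
  simp

lemma sum_Iic_cons_succ {q : ℕ} (a : ℕ) (b : Fin q → ℕ) (k : Fin q) :
    ∑ i ∈ Finset.Iic k.succ, ((Fin.cons a b : Fin (q+1) → ℕ) i : ℂ)
      = (a : ℂ) + ∑ i ∈ Finset.Iic k, (b i : ℂ) := by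
  rw [sum_Iic_eq_ite, sum_Iic_eq_ite, Fin.sum_univ_succ]
  simp [Fin.succ_le_succ_iff, Fin.zero_le]

lemma sum_Iic_cons_shift {q : ℕ} (a : ℕ) (b : Fin q → ℕ) (k : Fin (q+1)) :
    ∑ i ∈ Finset.Iic k, ((Fin.cons (a+1) b : Fin (q+1) → ℕ) i : ℂ)
      = 1 + ∑ i ∈ Finset.Iic k, ((Fin.cons a b : Fin (q+1) → ℕ) i : ℂ) := by
  rw [sum_Iic_eq_ite, sum_Iic_eq_ite, Fin.sum_univ_succ, Fin.sum_univ_succ]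
  simp only [Fin.cons_zero, Fin.cons_succ, Fin.zero_le, if_true]
  push_cast
  ring

lemma summable_pi_prod : ∀ (q : ℕ) (f : Fin q → ℕ → ℝ), (∀ k, Summable (f k)) →
    (∀ k n, 0 ≤ f k n) → Summable (fun n : Fin q → ℕ => ∏ k, f k (n k)) := by
  intro q
  induction q with
  | zero =>
    intro f _ _
    simpa using summable_of_finite_support (Set.toFinite _)
  | succ q ih =>
    intro f hf h0
    refine ((Fin.consEquiv (fun _ : Fin (q+1) => ℕ)).summable_iff
      (f := fun n : Fin (q+1) → ℕ => ∏ k, f k (n k))).1 ?_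
    have he : ((fun n : Fin (q+1) → ℕ => ∏ k, f k (n k)) ∘ (Fin.consEquiv (fun _ : Fin (q+1) => ℕ)))
        = fun p : ℕ × (Fin q → ℕ) => f 0 p.1 * ∏ k : Fin q, f k.succ (p.2 k) := by
      funext p
      simp only [Function.comp_apply, Fin.consEquiv_apply, Fin.prod_univ_succ, Fin.cons_zero,
        Fin.cons_succ]
    rw [he]
    have hg : Summable (fun b : Fin q → ℕ => ∏ k : Fin q, f k.succ (b k)) :=
      ih (fun k => f k.succ) (fun k => hf k.succ) (fun k n => h0 k.succ n)
    have hg0 : ∀ b : Fin q → ℕ, 0 ≤ ∏ k : Fin q, f k.succ (b k) :=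
      fun b => Finset.prod_nonneg fun k _ => h0 k.succ (b k)
    exact Summable.mul_of_nonneg (f := f 0)
      (g := fun b : Fin q → ℕ => ∏ k : Fin q, f k.succ (b k))
      (hf 0) hg (fun n => h0 0 n) hg0

lemma summable_norm_T (c q : ℕ) (hc : 1 ≤ c) (t : Fin q → ℂ) (ht : ∀ i, 1 < (t i).re) :
    Summable (fun n : Fin q → ℕ =>
      ‖∏ k : Fin q, ((∑ i ∈ Finset.Iic k, (n i : ℂ)) + (k : ℕ) + (c : ℕ)) ^ (-(t k))‖) := by
  set f : Fin q → ℕ → ℝ := fun k m => ((m : ℝ) + 1) ^ (-(t k).re) with hf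
  have hfs : ∀ k, Summable (f k) := by
    intro k
    have h1 : Summable (fun m : ℕ => (m : ℝ) ^ (-(t k).re)) :=
      Real.summable_nat_rpow.2 (by have := ht k; linarith)
    have h2 := (summable_nat_add_iff (f := fun m : ℕ => (m : ℝ) ^ (-(t k).re)) 1).2 h1
    refine h2.congr fun m => ?_
    push_cast
    rfl
  have hf0 : ∀ k m, 0 ≤ f k m := fun k m => Real.rpow_nonneg (by positivity) _
  refine Summable.of_nonneg_of_le (fun n => norm_nonneg _) (fun n => ?_)
    (summable_pi_prod q f hfs hf0)
  rw [norm_prod]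
  refine Finset.prod_le_prod (fun k _ => norm_nonneg _) (fun k _ => ?_)
  set N : ℕ := (∑ i ∈ Finset.Iic k, n i) + k + c with hN
  have hb : ((∑ i ∈ Finset.Iic k, (n i : ℂ)) + (k : ℕ) + (c : ℕ)) = ((N : ℕ) : ℂ) := by
    push_cast [hN]
    ring
  rw [hb]
  have hNpos : 0 < (N : ℝ) := by
    have : 0 < N := by omega
    exact_mod_cast this
  have h3 : ‖((N : ℕ) : ℂ) ^ (-(t k))‖ = (N : ℝ) ^ (-(t k).re) := by
    rw [show ((N : ℕ) : ℂ) = (((N : ℕ) : ℝ) : ℂ) by norm_cast]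
    rw [Complex.norm_cpow_eq_rpow_re_of_pos hNpos]
    simp [Complex.neg_re]
  rw [h3, hf]
  refine Real.rpow_le_rpow_of_nonpos (by positivity) ?_ (by have := ht k; linarith)
  have hle : n k + 1 ≤ N := by
    have : n k ≤ ∑ i ∈ Finset.Iic k, n i :=
      Finset.single_le_sum (fun i _ => Nat.zero_le _) (Finset.mem_Iic.2 le_rfl)
    omega
  exact_mod_cast hle

/-- last-`j` entries helper, total function -/
noncomputable def tl (q j : ℕ) (t : Fin q → ℂ) : Fin j → ℂ :=
  fun k => if h : q - j + k.1 < q then t ⟨q - j + k.1, h⟩ else 0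

lemma Fpoly_eq (q : ℕ) (t : Fin q → ℂ) :
    Fpoly q t = (∑ j ∈ Finset.Icc 1 q, (-1:ℂ)^(q-j+2) * ez j (tl q j t)) - (-1)^(q+1) := by
  unfold Fpoly
  rw [← Finset.sum_attach (Finset.Icc 1 q) (fun j => (-1:ℂ)^(q-j+2) * ez j (tl q j t))]
  congr 1
  refine Finset.sum_congr rfl fun j _ => ?_
  refine congrArg _ (congrArg (ez j.1) ?_)
  funext k
  have h1 := j.2
  simp only [Finset.mem_Icc] at h1
  have hc : q - j.1 + k.1 < q := by have := k.isLt; omega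
  simp only [tl, dif_pos hc]

lemma Fpoly_succ (q : ℕ) (t : Fin (q+1) → ℂ) :
    Fpoly (q+1) t = ez (q+1) t - Fpoly q (t ∘ Fin.succ) := by
  rw [Fpoly_eq, Fpoly_eq]
  rw [Finset.sum_Icc_succ_top (by omega : 1 ≤ q+1)]
  have h1 : tl (q+1) (q+1) t = t := by
    funext k
    have hc : q + 1 - (q+1) + k.1 < q + 1 := by have := k.isLt; omega
    simp only [tl, dif_pos hc]
    congr 1
    exact Fin.ext (by simp)
  have h2 : ∀ j ∈ Finset.Icc 1 q,
      (-1:ℂ)^(q+1-j+2) * ez j (tl (q+1) j t)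
        = (-1) * ((-1:ℂ)^(q-j+2) * ez j (tl q j (t ∘ Fin.succ))) := by
    intro j hj
    simp only [Finset.mem_Icc] at hj
    have e1 : tl (q+1) j t = tl q j (t ∘ Fin.succ) := by
      funext k
      have hk := k.isLt
      have c1 : q + 1 - j + k.1 < q + 1 := by omega
      have c2 : q - j + k.1 < q := by omega
      simp only [tl, dif_pos c1, dif_pos c2, Function.comp_apply]
      congr 1
      exact Fin.ext (by simp [Fin.val_succ]; omega)
    rw [e1, show q+1-j+2 = (q-j+2)+1 by omega, pow_succ]
    ring
  rw [Finset.sum_congr rfl h2, h1, show q+1-(q+1)+2 = 2 by omega, ← Finset.mul_sum,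
    show q+1+1 = (q+1)+1 from rfl, pow_succ]
  ring

noncomputable def T (c q : ℕ) (t : Fin q → ℂ) : ℂ :=
  ∑' n : Fin q → ℕ, ∏ k : Fin q,
    ((∑ i ∈ Finset.Iic k, (n i : ℂ)) + (k : ℕ) + (c : ℕ)) ^ (-(t k))

lemma ez_eq_T (q : ℕ) (t : Fin q → ℂ) : ez q t = T 1 q t := by
  unfold ez T
  norm_num

lemma T_succ (q : ℕ) (t : Fin (q+1) → ℂ) (ht : ∀ i, 1 < (t i).re) :
    ez (q+1) t = T 2 q (t ∘ Fin.succ) + T 2 (q+1) t := by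
  classical
  set F : (Fin (q+1) → ℕ) → ℂ := fun n =>
    ∏ k : Fin (q+1), ((∑ i ∈ Finset.Iic k, (n i : ℂ)) + (k : ℕ) + 1) ^ (-(t k)) with hF
  have hFsum : Summable F := by
    have := summable_norm_T 1 (q+1) le_rfl t ht
    refine (Summable.of_norm ?_)
    refine this.congr fun n => ?_
    simp only [Nat.cast_one, hF]
  set e := Fin.consEquiv (fun _ : Fin (q+1) => ℕ) with he
  set G : ℕ × (Fin q → ℕ) → ℂ := fun p => F (Fin.cons p.1 p.2) with hG
  have hGsum : Summable G := by
    have := (e.summable_iff (f := F)).2 hFsum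
    exact this.congr fun p => rfl
  -- step 1: ez = ∑' p, G p
  have step1 : ez (q+1) t = ∑' p : ℕ × (Fin q → ℕ), G p := by
    rw [show ez (q+1) t = ∑' n, F n from rfl, ← e.tsum_eq F]
    rfl
  -- step 2: Fubini and peel off a = 0
  have hrow : Summable fun a : ℕ => ∑' b : Fin q → ℕ, G (a, b) := hGsum.prod
  have step2 : ∑' p : ℕ × (Fin q → ℕ), G p
      = (∑' b : Fin q → ℕ, G (0, b)) + ∑' a : ℕ, ∑' b : Fin q → ℕ, G (a + 1, b) := by
    rw [Summable.tsum_prod hGsum, Summable.tsum_eq_zero_add hrow]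
  -- the a = 0 slice
  have slice0 : (∑' b : Fin q → ℕ, G (0, b)) = T 2 q (t ∘ Fin.succ) := by
    refine tsum_congr fun b => ?_
    show F (Fin.cons 0 b) = _
    simp only [hF]
    rw [Fin.prod_univ_succ]
    have hIic0 : (Finset.Iic (0 : Fin (q+1))) = {0} := by
      ext i
      simp [Fin.le_zero_iff]
    have h0 : ((∑ i ∈ Finset.Iic (0 : Fin (q+1)), ((Fin.cons 0 b : Fin (q+1) → ℕ) i : ℂ))
        + ((0 : Fin (q+1)) : ℕ) + 1) ^ (-(t 0)) = 1 := by
      rw [hIic0]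
      simp
    rw [h0, one_mul]
    refine Finset.prod_congr rfl fun k _ => ?_
    rw [sum_Iic_cons_succ 0 b k]
    congr 1
    push_cast [Fin.val_succ]
    ring
  -- the a ≥ 1 part
  have slice1 : (∑' a : ℕ, ∑' b : Fin q → ℕ, G (a + 1, b)) = T 2 (q+1) t := by
    set G' : ℕ × (Fin q → ℕ) → ℂ := fun p => G (p.1 + 1, p.2) with hG'
    have hG'sum : Summable G' := by
      refine hGsum.comp_injective (i := fun p : ℕ × (Fin q → ℕ) => (p.1 + 1, p.2)) ?_
      intro p p' hpp
      simp only [Prod.mk.injEq] at hpp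
      exact Prod.ext (by omega) hpp.2
    rw [show (∑' a : ℕ, ∑' b : Fin q → ℕ, G (a + 1, b)) = ∑' p : ℕ × (Fin q → ℕ), G' p from
      (Summable.tsum_prod hG'sum).symm]
    have key : ∀ p : ℕ × (Fin q → ℕ), G' p
        = ∏ k : Fin (q+1), ((∑ i ∈ Finset.Iic k, ((Fin.cons p.1 p.2 : Fin (q+1) → ℕ) i : ℂ))
            + (k : ℕ) + ((2 : ℕ) : ℂ)) ^ (-(t k)) := by
      intro p
      show F (Fin.cons (p.1 + 1) p.2) = _
      simp only [hF]
      refine Finset.prod_congr rfl fun k _ => ?_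
      rw [sum_Iic_cons_shift p.1 p.2 k]
      congr 1
      push_cast
      ring
    rw [tsum_congr key]
    unfold T
    rw [← e.tsum_eq]
    rfl
  rw [step1, step2, slice0, slice1]

lemma Fpoly_eq_T (q : ℕ) (t : Fin q → ℂ) (ht : ∀ i, 1 < (t i).re) :
    Fpoly q t = T 2 q t := by
  induction q with
  | zero =>
    have h1 : Fpoly 0 t = 1 := by
      unfold Fpoly
      rw [Finset.sum_eq_zero (fun j _ => absurd (Finset.mem_Icc.1 j.2) (by omega))]
      norm_num
    have h2 : T 2 0 t = 1 := by
      unfold T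
      rw [tsum_eq_single (fun i => 0) (fun b hb => absurd (Subsingleton.elim b _) hb)]
      simp
  
    rw [h1, h2]
  | succ q ih =>
    rw [Fpoly_succ, T_succ q t ht, ih (t ∘ Fin.succ) (fun i => ht i.succ)]
    ring

/-- For `r ≥ 2` (i.e. `q = r − 1 ≥ 1`) and `Re ρ_k > 1` for all `k`,
`F_{r−1}(ρ₂,…,ρ_r)` equals the absolutely convergent series
`Σ_{n₂,…,n_r ≥ 1} (1+n₂)^{-ρ₂}(1+n₂+n₃)^{-ρ₃}⋯(1+n₂+⋯+n_r)^{-ρ_r}`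
(here indexed by `n : Fin q → ℕ`, with `1 + n₂ + ⋯ + n_{k+2} = (Σ_{i≤k} n_i) + k + 2`). -/
theorem Fpoly_eq_series (q : ℕ) (hq : 1 ≤ q) (t : Fin q → ℂ)
    (ht : ∀ i, 1 < (t i).re) :
    Summable (fun n : Fin q → ℕ =>
      ‖∏ k : Fin q, ((∑ i ∈ Finset.Iic k, (n i : ℂ)) + (k : ℕ) + 2) ^ (-(t k))‖) ∧
    Fpoly q t =
      ∑' n : Fin q → ℕ, ∏ k : Fin q,
        ((∑ i ∈ Finset.Iic k, (n i : ℂ)) + (k : ℕ) + 2) ^ (-(t k)) := by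
  constructor
  · have h := summable_norm_T 2 q (by omega) t ht
    refine h.congr fun n => ?_
    simp only [Nat.cast_ofNat]
  · rw [Fpoly_eq_T q t ht]
    unfold T
    simp only [Nat.cast_ofNat]
end
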